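/- Let c ≤ d be real numbers and let P : ℝ → ℂ be a bounded measurable function with P(x) = 0 for all x < c and P(x) = 1 for all x > d (a switch function). Then for every z ∈ ℝ the function x ↦ P(x) − P(x+z) is integrable on ℝ and ∫_ℝ (P(x) − P(x+z)) dx = −z. -/

import Mathlib

open MeasureTheory

/-- For a switch function `P` (bounded measurable, `P = 0` for `x < c`, `P = 1` for `x > d`)
and every `z ∈ ℝ`, the function `x ↦ P(x) − P(x+z)` is integrable with
`∫ (P(x) − P(x+z)) dx = −z`. -/
theorem switch_function_translation_integral
    (c d : ℝ) (hcd : c ≤ d) (P : ℝ → ℂ) (hmeas : Measurable P)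
    (hbdd : ∃ C : ℝ, ∀ x : ℝ, ‖P x‖ ≤ C)
    (hc : ∀ x : ℝ, x < c → P x = 0) (hd : ∀ x : ℝ, x > d → P x = 1) (z : ℝ) :
    Integrable (fun x : ℝ => P x - P (x + z)) ∧
      (∫ x : ℝ, (P x - P (x + z))) = -(z : ℂ) := by
  obtain ⟨C, hC⟩ := hbdd
  set ind : ℝ → ℂ := (Set.Ioi d).indicator 1 with hind
  set Q : ℝ → ℂ := fun x => P x - ind x with hQdef
  have hQmeas : Measurable Q :=
    hmeas.sub (measurable_one.indicator measurableSet_Ioi)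
  have hQsupp : ∀ x, x ∉ Set.Icc c d → Q x = 0 := by
    intro x hx
    simp only [Set.mem_Icc, not_and_or, not_le] at hx
    rcases hx with h | h
    · have h1 : x ∉ Set.Ioi d := by simp; linarith
      simp [Q, ind, hc x h, Set.indicator_of_notMem h1]
    · have h1 : x ∈ Set.Ioi d := h
      simp [Q, ind, hd x h, Set.indicator_of_mem h1]
  have hQint : Integrable Q := by
    apply Integrable.mono' (g := (Set.Icc c d).indicator (fun _ => |C| + 1))
    · exact (IntegrableOn.integrable_indicator
        (integrableOn_const measure_Icc_lt_top.ne) measurableSet_Icc)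
    · exact hQmeas.aestronglyMeasurable
    · refine Filter.Eventually.of_forall fun x => ?_
      by_cases hx : x ∈ Set.Icc c d
      · rw [Set.indicator_of_mem hx]
        calc ‖Q x‖ ≤ ‖P x‖ + ‖ind x‖ := norm_sub_le _ _
        _ ≤ |C| + 1 := by
            have : ‖ind x‖ ≤ 1 := by
              by_cases h : x ∈ Set.Ioi d
              · simp [ind, Set.indicator_of_mem h]
              · simp [ind, Set.indicator_of_notMem h]
            have := hC x
            have := le_abs_self C
            linarith
      · rw [Set.indicator_of_notMem hx, hQsupp x hx]; simp
  have hQint' : Integrable (fun x => Q (x + z)) := hQint.comp_add_right z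
  have hshift : (fun x : ℝ => ind (x + z)) = (Set.Ioi (d - z)).indicator 1 := by
    funext x
    simp only [ind, Set.indicator_apply, Set.mem_Ioi]
    congr 1
    simp only [eq_iff_iff]
    constructor <;> intro <;> linarith
  -- the indicator difference
  have hdiff : Integrable (fun x : ℝ => ind x - ind (x + z)) ∧
      (∫ x : ℝ, (ind x - ind (x + z))) = -(z : ℂ) := by
    rcases le_total 0 z with hz | hz
    · have heq : (fun x : ℝ => ind x - ind (x + z)) =
          fun x => -((Set.Ioc (d - z) d).indicator (fun _ => (1 : ℂ)) x) := by
        funext x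
        rw [show ind (x + z) = (Set.Ioi (d - z)).indicator 1 x from congrFun hshift x]
        by_cases h1 : x ∈ Set.Ioi d
        · have h2 : x ∈ Set.Ioi (d - z) := by simp at h1 ⊢; linarith
          have h3 : x ∉ Set.Ioc (d - z) d := by simp at h1 ⊢; intro; linarith
          simp [ind, Set.indicator_of_mem h1, Set.indicator_of_mem h2,
            Set.indicator_of_notMem h3]
        · by_cases h2 : x ∈ Set.Ioi (d - z)
          · have h3 : x ∈ Set.Ioc (d - z) d := by simp at h1 h2 ⊢; exact ⟨h2, h1⟩
            simp [ind, Set.indicator_of_notMem h1, Set.indicator_of_mem h2,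
              Set.indicator_of_mem h3]
          · have h3 : x ∉ Set.Ioc (d - z) d := by simp at h2 ⊢; intro h; linarith
            simp [ind, Set.indicator_of_notMem h1, Set.indicator_of_notMem h2,
              Set.indicator_of_notMem h3]
      rw [heq]
      have hint : Integrable ((Set.Ioc (d - z) d).indicator (fun _ => (1 : ℂ))) :=
        IntegrableOn.integrable_indicator
          (integrableOn_const measure_Ioc_lt_top.ne) measurableSet_Ioc
      refine ⟨hint.neg, ?_⟩
      rw [integral_neg, integral_indicator_const _ measurableSet_Ioc]
      rw [measureReal_def, Real.volume_Ioc]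
      rw [ENNReal.toReal_ofReal (by linarith)]
      simp [Complex.real_smul]
    · have heq : (fun x : ℝ => ind x - ind (x + z)) =
          fun x => (Set.Ioc d (d - z)).indicator (fun _ => (1 : ℂ)) x := by
        funext x
        rw [show ind (x + z) = (Set.Ioi (d - z)).indicator 1 x from congrFun hshift x]
        by_cases h2 : x ∈ Set.Ioi (d - z)
        · have h1 : x ∈ Set.Ioi d := by simp at h2 ⊢; linarith
          have h3 : x ∉ Set.Ioc d (d - z) := by simp at h2 ⊢; intro; linarith
          simp [ind, Set.indicator_of_mem h1, Set.indicator_of_mem h2,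
            Set.indicator_of_notMem h3]
        · by_cases h1 : x ∈ Set.Ioi d
          · have h3 : x ∈ Set.Ioc d (d - z) := by simp at h1 h2 ⊢; exact ⟨h1, h2⟩
            simp [ind, Set.indicator_of_mem h1, Set.indicator_of_notMem h2,
              Set.indicator_of_mem h3]
          · have h3 : x ∉ Set.Ioc d (d - z) := by simp at h1 ⊢; intro h; linarith
            simp [ind, Set.indicator_of_notMem h1, Set.indicator_of_notMem h2,
              Set.indicator_of_notMem h3]
      rw [heq]
      have hint : Integrable ((Set.Ioc d (d - z)).indicator (fun _ => (1 : ℂ))) :=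
        IntegrableOn.integrable_indicator
          (integrableOn_const measure_Ioc_lt_top.ne) measurableSet_Ioc
      refine ⟨hint, ?_⟩
      rw [integral_indicator_const _ measurableSet_Ioc, measureReal_def, Real.volume_Ioc]
      rw [ENNReal.toReal_ofReal (by linarith)]
      simp [Complex.real_smul]
  have key : (fun x : ℝ => P x - P (x + z)) =
      fun x => (Q x - Q (x + z)) + (ind x - ind (x + z)) := by
    funext x; simp only [Q]; ring
  rw [key]
  have hint1 : Integrable (fun x : ℝ => Q x - Q (x + z)) := hQint.sub hQint'
  refine ⟨hint1.add hdiff.1, ?_⟩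
  rw [integral_add hint1 hdiff.1, integral_sub hQint hQint',
    integral_add_right_eq_self Q z, hdiff.2]
  ring
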